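/- (Max-Coverage reduction gap) Given a balanced set system with n elements and m sets, each of size n/k, construct the unit-ρ AVA instance with m buyers (one per set), k choice items of value 1 + (ε/2)·(n/k) for every buyer, and n element items where the item for element e has value 1 − ε/2 for buyers whose set contains e and zero otherwise. Then: (a) if there exist k sets covering all n elements with each element covered exactly once, the AVA optimum is at least n + k; (b) if no k sets cover more than n(1 − 1/e + δ) elements, the AVA optimum is at most k + n(1 − 1/e + δ) + nε/2. -/

import Mathlib

/-- Values of the AVA instance built from a balanced set system: `k` choice
items of value `1 + (ε/2)(n/k)` for every buyer, and `n` element items, the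
item of element `e` having value `1 - ε/2` exactly for buyers whose set
contains `e`. -/
noncomputable def mcVal (n m k : ℕ) (ε : ℝ) (S : Fin m → Finset (Fin n)) :
    (Fin k ⊕ Fin n) → Fin m → ℝ :=
  fun it b =>
    Sum.elim (fun _ => 1 + ε / 2 * ((n : ℝ) / k))
      (fun e => if e ∈ S b then 1 - ε / 2 else 0) it

/-- Unit-`ρ` AVA feasibility. -/
def mcFeasible {α : Type*} [Fintype α] [DecidableEq α] {m : ℕ}
    (w : α → Fin m → ℝ) (x : α → Option (Fin m)) : Prop :=
  ∀ b : Fin m, ((Finset.univ.filter fun a => x a = some b).card : ℝ) ≤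
    ∑ a ∈ Finset.univ.filter fun a => x a = some b, w a b

/-- Welfare of an allocation. -/
noncomputable def mcValue {α : Type*} [Fintype α] {m : ℕ}
    (w : α → Fin m → ℝ) (x : α → Option (Fin m)) : ℝ :=
  ∑ a, ((x a).map (w a)).getD 0

/-- The Max-Coverage reduction gap: (a) an exact cover by `k` sets yields an
AVA solution of value at least `n + k`; (b) if no `k` sets cover more than
`n(1 - 1/e + δ)` elements, every feasible AVA solution has value at most
`k + n(1 - 1/e + δ) + nε/2`. -/
theorem stmt_14 (n m k : ℕ) (hn : 0 < n) (hk : 0 < k) (hkm : k ≤ m)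
    (ε δ : ℝ) (hε0 : 0 < ε) (hε1 : ε < 1) (hδ : 0 ≤ δ)
    (S : Fin m → Finset (Fin n))
    (hbal : ∀ b, ((S b).card : ℝ) = (n : ℝ) / k) :
    ((∃ T : Finset (Fin m), T.card = k ∧ ∀ e : Fin n, ∃! b, b ∈ T ∧ e ∈ S b) →
      ∃ x : (Fin k ⊕ Fin n) → Option (Fin m),
        mcFeasible (mcVal n m k ε S) x ∧
        (n : ℝ) + k ≤ mcValue (mcVal n m k ε S) x) ∧
    ((∀ T : Finset (Fin m), T.card ≤ k →
        ((T.biUnion S).card : ℝ) ≤ n * (1 - 1 / Real.exp 1 + δ)) →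
      ∀ x : (Fin k ⊕ Fin n) → Option (Fin m),
        mcFeasible (mcVal n m k ε S) x →
        mcValue (mcVal n m k ε S) x ≤
          k + n * (1 - 1 / Real.exp 1 + δ) + n * ε / 2) := by
  classical
  have hk0 : (k : ℝ) ≠ 0 := Nat.cast_ne_zero.mpr hk.ne'
  -- generic rewriting of the feasibility card as a sum over the two item types
  have hcard : ∀ (x : (Fin k ⊕ Fin n) → Option (Fin m)) (b : Fin m),
      ((Finset.univ.filter fun a => x a = some b).card : ℝ) =
        (∑ i : Fin k, if x (Sum.inl i) = some b then (1:ℝ) else 0) +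
        ∑ e : Fin n, if x (Sum.inr e) = some b then (1:ℝ) else 0 := by
    intro x b
    rw [Finset.card_filter]
    push_cast
    rw [Fintype.sum_sum_type]
  have hsumw : ∀ (x : (Fin k ⊕ Fin n) → Option (Fin m)) (b : Fin m),
      (∑ a ∈ Finset.univ.filter fun a => x a = some b, mcVal n m k ε S a b) =
        (∑ i : Fin k, if x (Sum.inl i) = some b then 1 + ε / 2 * ((n:ℝ)/k) else 0) +
        ∑ e : Fin n, if x (Sum.inr e) = some b then
            (if e ∈ S b then 1 - ε / 2 else 0) else 0 := by
    intro x b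
    rw [Finset.sum_filter, Fintype.sum_sum_type]
    rfl
  have hvalue : ∀ (x : (Fin k ⊕ Fin n) → Option (Fin m)),
      mcValue (mcVal n m k ε S) x =
        (∑ i : Fin k, ((x (Sum.inl i)).map (fun _ => 1 + ε / 2 * ((n:ℝ)/k))).getD 0) +
        ∑ e : Fin n, ((x (Sum.inr e)).map
            (fun b => if e ∈ S b then 1 - ε / 2 else 0)).getD 0 := by
    intro x
    rw [mcValue, Fintype.sum_sum_type]
    rfl
  constructor
  · rintro ⟨T, hTc, hTu⟩
    choose g hg hguniq using hTu
    set f : Fin k → Fin m := fun i => ((Finset.equivFinOfCardEq hTc).symm i : Fin m)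
      with hf
    have hfT : ∀ i, f i ∈ T := fun i => ((Finset.equivFinOfCardEq hTc).symm i).2
    have hsumf : ∀ F : Fin m → ℝ, ∑ i : Fin k, F (f i) = ∑ b ∈ T, F b := by
      intro F
      rw [← Finset.sum_coe_sort T F]
      exact (Equiv.sum_comp (Finset.equivFinOfCardEq hTc).symm
        (fun t : T => F (t : Fin m)))
    refine ⟨Sum.elim (fun i => some (f i)) (fun e => some (g e)), ?_, ?_⟩
    · intro b
      rw [hcard, hsumw]
      simp only [Sum.elim_inl, Sum.elim_inr, Option.some_inj]
      have h1 : ∑ i : Fin k, (if f i = b then (1:ℝ) else 0) =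
          if b ∈ T then 1 else 0 := by
        rw [hsumf (fun b' => if b' = b then (1:ℝ) else 0)]
        simp [Finset.sum_ite_eq']
      have h2 : ∑ i : Fin k, (if f i = b then 1 + ε / 2 * ((n:ℝ)/k) else 0) =
          if b ∈ T then 1 + ε / 2 * ((n:ℝ)/k) else 0 := by
        rw [hsumf (fun b' => if b' = b then 1 + ε / 2 * ((n:ℝ)/k) else 0)]
        simp [Finset.sum_ite_eq']
      have hgb : ∀ e, g e = b ↔ (b ∈ T ∧ e ∈ S b) := by
        intro e
        constructor
        · rintro rfl; exact hg e
        · rintro ⟨hb, he⟩; exact (hguniq e b ⟨hb, he⟩).symm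
      by_cases hbT : b ∈ T
      · have h3 : ∑ e : Fin n, (if g e = b then (1:ℝ) else 0) = (n:ℝ)/k := by
          have : ∀ e : Fin n, (if g e = b then (1:ℝ) else 0) =
              if e ∈ S b then (1:ℝ) else 0 := by
            intro e
            simp [hgb e, hbT]
          rw [Finset.sum_congr rfl (fun e _ => this e)]
          rw [Finset.sum_ite_mem, Finset.univ_inter, Finset.sum_const,
            nsmul_eq_mul, mul_one]
          exact hbal b
        have h4 : ∑ e : Fin n, (if g e = b then
            (if e ∈ S b then 1 - ε / 2 else 0) else 0) = ((n:ℝ)/k) * (1 - ε/2) := by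
          have : ∀ e : Fin n, (if g e = b then
              (if e ∈ S b then 1 - ε / 2 else 0) else 0) =
              if e ∈ S b then (1 - ε/2) else 0 := by
            intro e
            by_cases h : g e = b
            · have := (hgb e).mp h
              simp [h, this.2]
            · have : ¬ e ∈ S b := fun he => h ((hgb e).mpr ⟨hbT, he⟩)
              simp [h, this]
          rw [Finset.sum_congr rfl (fun e _ => this e)]
          rw [Finset.sum_ite_mem, Finset.univ_inter, Finset.sum_const,
            nsmul_eq_mul, hbal b]
        rw [h1, h2, h3, h4, if_pos hbT, if_pos hbT]
        have : (1 + ε / 2 * ((n:ℝ)/k)) + ((n:ℝ)/k) * (1 - ε/2) = 1 + (n:ℝ)/k := by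
          ring
        rw [this]
      · have h3 : ∑ e : Fin n, (if g e = b then (1:ℝ) else 0) = 0 := by
          apply Finset.sum_eq_zero
          intro e _
          have : ¬ g e = b := fun h => hbT ((hgb e).mp h).1
          simp [this]
        have h4 : ∑ e : Fin n, (if g e = b then
            (if e ∈ S b then 1 - ε / 2 else 0) else 0) = 0 := by
          apply Finset.sum_eq_zero
          intro e _
          have : ¬ g e = b := fun h => hbT ((hgb e).mp h).1
          simp [this]
        rw [h1, h2, h3, h4, if_neg hbT, if_neg hbT]
    · rw [hvalue]
      simp only [Sum.elim_inl, Sum.elim_inr, Option.map_some, Option.getD_some]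
      have h1 : ∑ i : Fin k, (1 + ε / 2 * ((n:ℝ)/k)) = k * (1 + ε / 2 * ((n:ℝ)/k)) := by
        rw [Finset.sum_const, Finset.card_univ, Fintype.card_fin, nsmul_eq_mul]
      have h2 : ∑ e : Fin n, (if e ∈ S (g e) then 1 - ε / 2 else 0) = n * (1 - ε/2) := by
        have : ∀ e : Fin n, (if e ∈ S (g e) then 1 - ε / 2 else 0) = 1 - ε/2 := by
          intro e; simp [(hg e).2]
        rw [Finset.sum_congr rfl (fun e _ => this e), Finset.sum_const,
          Finset.card_univ, Fintype.card_fin, nsmul_eq_mul]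
      rw [h1, h2]
      have : (k:ℝ) * (1 + ε / 2 * ((n:ℝ)/k)) + n * (1 - ε/2) = (n:ℝ) + k := by
        field_simp
        ring
      rw [this]
  · intro hcov x hfeas
    -- any buyer receiving an element item holds a choice item
    have hchoice : ∀ b : Fin m, (∃ e : Fin n, x (Sum.inr e) = some b) →
        ∃ i : Fin k, x (Sum.inl i) = some b := by
      intro b ⟨e, he⟩
      by_contra hno
      push_neg at hno
      have hle := hfeas b
      rw [hcard, hsumw] at hle
      have hz1 : ∑ i : Fin k, (if x (Sum.inl i) = some b then (1:ℝ) else 0) = 0 :=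
        Finset.sum_eq_zero (fun i _ => by simp [hno i])
      have hz2 : ∑ i : Fin k, (if x (Sum.inl i) = some b then
          1 + ε / 2 * ((n:ℝ)/k) else 0) = 0 :=
        Finset.sum_eq_zero (fun i _ => by simp [hno i])
      rw [hz1, hz2, zero_add, zero_add] at hle
      have hub : ∀ e' : Fin n, (if x (Sum.inr e') = some b then
          (if e' ∈ S b then 1 - ε / 2 else 0) else 0) ≤
          (if x (Sum.inr e') = some b then (1:ℝ) else 0) - (if x (Sum.inr e') = some b then ε/2 else 0) := by
        intro e'
        by_cases h : x (Sum.inr e') = some b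
        · by_cases h2 : e' ∈ S b <;> simp [h, h2] <;> linarith
        · simp [h]
      have := Finset.sum_le_sum (fun e' (_ : e' ∈ Finset.univ) => hub e')
      rw [Finset.sum_sub_distrib] at this
      have hpos : (0:ℝ) < ∑ e' : Fin n, (if x (Sum.inr e') = some b then ε/2 else 0) := by
        have : ∀ e' : Fin n, (0:ℝ) ≤ if x (Sum.inr e') = some b then ε/2 else 0 := by
          intro e'; positivity
        calc (0:ℝ) < ε/2 := by linarith
          _ = if x (Sum.inr e) = some b then ε/2 else 0 := by simp [he]
          _ ≤ _ := Finset.single_le_sum (fun e' _ => this e') (Finset.mem_univ e)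
      linarith
    -- buyers receiving a useful element item
    set B : Finset (Fin m) :=
      Finset.univ.filter (fun b => ∃ e : Fin n, x (Sum.inr e) = some b ∧ e ∈ S b)
      with hB
    have hBk : (B.card : ℝ) ≤ k := by
      have : B.card ≤ Fintype.card (Fin k) := by
        have : Nonempty (Fin k) := ⟨⟨0, hk⟩⟩
        choose! ch hch using hchoice
        apply Finset.card_le_card_of_injOn (fun b => ch b)
        · intro b _; exact Finset.mem_univ _
        · intro b1 hb1 b2 hb2 hchEq
          rw [hB, Finset.mem_coe, Finset.mem_filter] at hb1 hb2
          obtain ⟨e1, he1, _⟩ := hb1.2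
          obtain ⟨e2, he2, _⟩ := hb2.2
          have h1 := hch b1 ⟨e1, he1⟩
          have h2 := hch b2 ⟨e2, he2⟩
          have hce : ch b1 = ch b2 := hchEq
          rw [hce] at h1
          rw [h1] at h2
          exact Option.some_inj.mp h2
      simpa using (Nat.cast_le (α := ℝ)).mpr this
    have hcovB := hcov B (by exact_mod_cast hBk)
    rw [hvalue]
    have hbound1 : (∑ i : Fin k, ((x (Sum.inl i)).map
        (fun _ => 1 + ε / 2 * ((n:ℝ)/k))).getD 0) ≤ k * (1 + ε / 2 * ((n:ℝ)/k)) := by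
      calc _ ≤ ∑ _i : Fin k, (1 + ε / 2 * ((n:ℝ)/k)) := by
              apply Finset.sum_le_sum
              intro i _
              cases h : x (Sum.inl i) with
              | none => simp; positivity
              | some b => simp
        _ = k * (1 + ε / 2 * ((n:ℝ)/k)) := by
              rw [Finset.sum_const, Finset.card_univ, Fintype.card_fin, nsmul_eq_mul]
    have hbound2 : (∑ e : Fin n, ((x (Sum.inr e)).map
        (fun b => if e ∈ S b then 1 - ε / 2 else 0)).getD 0) ≤
        ((B.biUnion S).card : ℝ) := by
      calc _ ≤ ∑ e : Fin n, (if e ∈ B.biUnion S then (1:ℝ) else 0) := by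
              apply Finset.sum_le_sum
              intro e _
              cases h : x (Sum.inr e) with
              | none =>
                simp only [Option.map_none, Option.getD_none]
                positivity
              | some b =>
                simp only [Option.map_some, Option.getD_some]
                by_cases h2 : e ∈ S b
                · have hbB : b ∈ B := by
                    rw [hB, Finset.mem_filter]
                    exact ⟨Finset.mem_univ _, e, h, h2⟩
                  have : e ∈ B.biUnion S := Finset.mem_biUnion.mpr ⟨b, hbB, h2⟩
                  simp [h2, this]
                  linarith
                · simp [h2]
                  positivity
        _ = ((B.biUnion S).card : ℝ) := by
              rw [Finset.sum_ite_mem, Finset.univ_inter, Finset.sum_const,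
                nsmul_eq_mul, mul_one]
    have hfinal : (k:ℝ) * (1 + ε / 2 * ((n:ℝ)/k)) = k + n * ε / 2 := by
      field_simp
    calc _ ≤ (k:ℝ) * (1 + ε / 2 * ((n:ℝ)/k)) + ((B.biUnion S).card : ℝ) :=
          add_le_add hbound1 hbound2
      _ ≤ (k + n * ε / 2) + n * (1 - 1 / Real.exp 1 + δ) := by
          rw [hfinal]; exact add_le_add_right hcovB _
      _ = k + n * (1 - 1 / Real.exp 1 + δ) + n * ε / 2 := by ring
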